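/- Let $Z$ be an abelian group, $q \geq 1$ an integer, and $K \leq Z$ a subgroup such that every element of $K$ has order dividing $q$ (equivalently, $x^q = 1$ for all $x \in K$). Suppose the quotient group $Z/K$ is finitely generated. Then: (i) the torsion subgroup $T$ of $Z$ has bounded exponent, i.e. there exists an integer $m \geq 1$ with $x^m = 1$ for all $x \in T$; (ii) $Z/T$ is a free abelian group of finite rank; and (iii) $Z$ is isomorphic to $\mathbb{Z}^r \times T$ for some integer $r \geq 0$. -/

import Mathlib

lemma myBoundedTorsion {G : Type*} [CommGroup G] (h : Group.FG G) :
    ∃ n : ℕ, 1 ≤ n ∧ ∀ x : G, IsOfFinOrder x → x ^ n = 1 := by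
  haveI : AddGroup.FG (Additive G) := GroupFG.iff_add_fg.1 h
  haveI : Module.Finite ℤ (Additive G) := Module.Finite.iff_addGroup_fg.mpr ‹_›
  haveI : IsNoetherian ℤ (Additive G) := inferInstance
  set S := Submodule.torsion ℤ (Additive G) with hS
  haveI : Module.Finite ℤ S := Module.Finite.iff_fg.mpr (IsNoetherian.noetherian S)
  haveI : Finite S := Module.finite_of_fg_torsion _ (Submodule.torsion_isTorsion)
  refine ⟨AddMonoid.exponent S, ?_, ?_⟩
  · exact Nat.one_le_iff_ne_zero.mpr (AddMonoid.exponent_ne_zero_of_finite)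
  · intro x hx
    have hmem : Additive.ofMul x ∈ S := by
      rw [hS, Submodule.mem_torsion_iff]
      obtain ⟨n, hn, h1⟩ := isOfFinOrder_iff_pow_eq_one.mp hx
      refine ⟨⟨(n : ℤ), mem_nonZeroDivisors_of_ne_zero (by exact_mod_cast hn.ne')⟩, ?_⟩
      show (n : ℤ) • Additive.ofMul x = 0
      rw [← ofMul_zpow]
      simp [h1]
    have := AddMonoid.exponent_nsmul_eq_zero (G := S) ⟨Additive.ofMul x, hmem⟩
    have h2 : AddMonoid.exponent S • Additive.ofMul x = 0 := congrArg Subtype.val this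
    rw [← ofMul_pow] at h2
    exact Additive.ofMul.injective h2

lemma mySplit {G Q : Type*} [CommGroup G] [CommGroup Q] {N : Subgroup G} (π : G →* Q)
    (hker : π.ker = N) (s : Q →* G) (hs : ∀ y, π (s y) = y) :
    Nonempty (G ≃* Q × N) := by
  refine ⟨{
    toFun := fun x => (π x, ⟨x * (s (π x))⁻¹, by
      rw [← hker, MonoidHom.mem_ker, map_mul, map_inv, hs, mul_inv_cancel]⟩)
    invFun := fun p => s p.1 * (p.2 : G)
    left_inv := fun x => by
      simp only []
      rw [mul_comm x, ← mul_assoc, mul_inv_cancel, one_mul]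
    right_inv := fun p => by
      obtain ⟨y, t⟩ := p
      have ht : π (t : G) = 1 := by
        rw [← MonoidHom.mem_ker, hker]; exact t.2
      have hπ : π (s y * (t : G)) = y := by rw [map_mul, hs, ht, mul_one]
      refine Prod.ext hπ (Subtype.ext ?_)
      show s y * (t : G) * (s (π (s y * (t : G))))⁻¹ = (t : G)
      rw [hπ, mul_comm (s y), mul_assoc, mul_inv_cancel, mul_one]
    map_mul' := fun x y => by
      refine Prod.ext (map_mul π x y) (Subtype.ext ?_)
      show x * y * (s (π (x * y)))⁻¹ = (x * (s (π x))⁻¹) * (y * (s (π y))⁻¹)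
      rw [map_mul, map_mul, mul_inv, mul_mul_mul_comm] }⟩

/-- Let `Z` be an abelian group, `q ≥ 1`, and `K ≤ Z` a subgroup with
`x ^ q = 1` for all `x ∈ K`, such that `Z/K` is finitely generated. Then the torsion subgroup
`T` of `Z` has bounded exponent, `Z/T` is free abelian of finite rank, and
`Z ≅ ℤ^r × T` for some `r ≥ 0`. -/
theorem stmt5 {Z : Type*} [CommGroup Z] (q : ℕ) (hq : 1 ≤ q)
    (K : Subgroup Z) (hK : ∀ x ∈ K, x ^ q = 1)
    (hfg : Group.FG (Z ⧸ K)) :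
    (∃ m : ℕ, 1 ≤ m ∧ ∀ x ∈ CommGroup.torsion Z, x ^ m = 1) ∧
    (∃ r : ℕ, Nonempty ((Z ⧸ CommGroup.torsion Z) ≃* Multiplicative (Fin r → ℤ))) ∧
    (∃ r : ℕ, Nonempty (Z ≃* Multiplicative (Fin r → ℤ) × (CommGroup.torsion Z))) := by
  set T := CommGroup.torsion Z with hT
  have hKT : K ≤ T := fun x hx =>
    isOfFinOrder_iff_pow_eq_one.mpr ⟨q, hq, hK x hx⟩
  -- Part (i)
  obtain ⟨n, hn1, hn⟩ := myBoundedTorsion hfg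
  have part1 : ∃ m : ℕ, 1 ≤ m ∧ ∀ x ∈ CommGroup.torsion Z, x ^ m = 1 := by
    refine ⟨n * q, Nat.one_le_iff_ne_zero.mpr (Nat.mul_ne_zero (Nat.one_le_iff_ne_zero.mp hn1) (Nat.one_le_iff_ne_zero.mp hq)), ?_⟩
    intro x hx
    have hfin : IsOfFinOrder ((x : Z ⧸ K)) := (QuotientGroup.mk' K).isOfFinOrder hx
    have h1 : ((x ^ n : Z) : Z ⧸ K) = 1 := by
      have := hn _ hfin
      rwa [← QuotientGroup.mk_pow] at this
    have h2 : x ^ n ∈ K := (QuotientGroup.eq_one_iff _).mp h1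
    rw [pow_mul]
    exact hK _ h2
  -- Part (ii): Z ⧸ T is f.g. and torsion-free
  have hsurj2 : Function.Surjective (QuotientGroup.map K T (MonoidHom.id Z) hKT) := by
    intro y
    obtain ⟨z, rfl⟩ := QuotientGroup.mk_surjective y
    exact ⟨QuotientGroup.mk z, rfl⟩
  haveI hfgT : Group.FG (Z ⧸ T) := Group.fg_of_surjective hsurj2
  have htf : IsMulTorsionFree (Z ⧸ T) := inferInstance
  haveI : AddGroup.FG (Additive (Z ⧸ T)) := GroupFG.iff_add_fg.1 hfgT
  haveI : Module.Finite ℤ (Additive (Z ⧸ T)) := Module.Finite.iff_addGroup_fg.mpr ‹_›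
  haveI htfA : IsAddTorsionFree (Additive (Z ⧸ T)) := by
    infer_instance
  haveI : NoZeroSMulDivisors ℤ (Additive (Z ⧸ T)) := IsAddTorsionFree.to_noZeroSMulDivisors_int
  obtain ⟨r, b⟩ := Module.basisOfFiniteTypeTorsionFree' (R := ℤ) (M := Additive (Z ⧸ T))
  set eAdd : Additive (Z ⧸ T) ≃+ (Fin r → ℤ) := b.equivFun.toAddEquiv with heAdd
  set e : (Z ⧸ T) ≃* Multiplicative (Fin r → ℤ) := AddEquiv.toMultiplicativeRight eAdd with he
  refine ⟨part1, ⟨r, ⟨e⟩⟩, ⟨r, ?_⟩⟩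
  -- Part (iii)
  set π : Z →* Z ⧸ T := QuotientGroup.mk' T with hπdef
  have hsurj : Function.Surjective π := QuotientGroup.mk'_surjective T
  choose sec hsec using hsurj
  set bb := Pi.basisFun ℤ (Fin r) with hbb
  set L : (Fin r → ℤ) →ₗ[ℤ] Additive Z :=
    bb.constr ℤ (fun i => Additive.ofMul (sec (e.symm (Multiplicative.ofAdd (bb i))))) with hL
  -- the additive version of π
  set πA : Additive Z →+ Additive (Z ⧸ T) := MonoidHom.toAdditive π with hπA
  have key : πA.toIntLinearMap.comp L = eAdd.symm.toAddMonoidHom.toIntLinearMap := by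
    apply bb.ext
    intro i
    simp only [LinearMap.comp_apply, hL, Module.Basis.constr_basis]
    show Additive.ofMul (π (sec (e.symm (Multiplicative.ofAdd (bb i))))) = eAdd.symm (bb i)
    rw [hsec]
    rfl
  set f : Multiplicative (Fin r → ℤ) →* Z := AddMonoidHom.toMultiplicativeLeft L.toAddMonoidHom
    with hf
  have hkey : ∀ v : Multiplicative (Fin r → ℤ), π (f v) = e.symm v := by
    intro v
    have := congrArg (fun g => g v.toAdd) (congrArg LinearMap.toAddMonoidHom key)
    have h2 : πA (L v.toAdd) = eAdd.symm v.toAdd := this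
    exact congrArg Additive.toMul h2
  set s : (Z ⧸ T) →* Z := f.comp e.toMonoidHom with hsdef
  have hs : ∀ y, π (s y) = y := by
    intro y
    show π (f (e y)) = y
    rw [hkey]
    exact e.symm_apply_apply y
  have hker : π.ker = T := QuotientGroup.ker_mk' T
  obtain ⟨E⟩ := mySplit π hker s hs
  exact ⟨E.trans (MulEquiv.prodCongr e (MulEquiv.refl T))⟩
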